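/- Let f: ℝ^d → ℝ be twice continuously differentiable with l-Lipschitz gradient and γ-Lipschitz Hessian in spectral norm, x* a point with ∇f(x*) = 0, β > 0 with ∇²f(x*) + βI invertible, K* = (∇²f(x*) + βI)⁻¹, η = ‖K*‖. Suppose the IPG iterates satisfy x(s+1) = x(s) − K(s)∇f(x(s)) and K(s+1) = K(s) − α(s)((∇²f(x(s)) + βI)K(s) − I) for 0 ≤ s ≤ t, with ρ := sup_s ‖I − α(s)(∇²f(x(s)) + βI)‖ < 1 and α nondecreasing on {0,…,t−1}. Then, with z(s) = x(s) − x* and K̃(0) = K(0) − K*, the combined bound ‖z(t+1)‖ ≤ (ηγ/2)‖z(t)‖² + ηβ‖z(t)‖ + l‖z(t)‖·( ρ^t‖K̃(0)‖ + ηγ α(t−1)( ‖z(t−1)‖ + ρ‖z(t−2)‖ + … + ρ^{t−1}‖z(0)‖ ) ) holds for t ≥ 1. -/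

import Mathlib

set_option synthInstance.maxHeartbeats 1000000
set_option maxHeartbeats 1000000
set_option linter.unusedVariables false


/-- The spectral norm (matrix norm induced by the Euclidean 2-norm) of a real matrix. -/
noncomputable def sNorm {d : ℕ} (M : Matrix (Fin d) (Fin d) ℝ) : ℝ :=
  ‖(Matrix.toEuclideanCLM (𝕜 := ℝ) M : EuclideanSpace ℝ (Fin d) →L[ℝ] EuclideanSpace ℝ (Fin d))‖

/-- The action of a real matrix on a Euclidean vector. -/
noncomputable def mApply {d : ℕ} (M : Matrix (Fin d) (Fin d) ℝ)
    (v : EuclideanSpace ℝ (Fin d)) : EuclideanSpace ℝ (Fin d) :=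
  Matrix.toEuclideanCLM (𝕜 := ℝ) M v

section Helpers
variable {d : ℕ}

lemma sNorm_nonneg (M : Matrix (Fin d) (Fin d) ℝ) : 0 ≤ sNorm M := norm_nonneg _

lemma mApply_norm_le (M : Matrix (Fin d) (Fin d) ℝ) (v : EuclideanSpace ℝ (Fin d)) :
    ‖mApply M v‖ ≤ sNorm M * ‖v‖ :=
  (Matrix.toEuclideanCLM (𝕜 := ℝ) M :
    EuclideanSpace ℝ (Fin d) →L[ℝ] EuclideanSpace ℝ (Fin d)).le_opNorm v

lemma sNorm_mul_le (A B : Matrix (Fin d) (Fin d) ℝ) : sNorm (A*B) ≤ sNorm A * sNorm B := by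
  unfold sNorm; rw [map_mul]; exact norm_mul_le _ _

lemma sNorm_smul (a : ℝ) (A : Matrix (Fin d) (Fin d) ℝ) : sNorm (a • A) = |a| * sNorm A := by
  unfold sNorm; rw [map_smul]
  rw [norm_smul (α := ℝ) a (Matrix.toEuclideanCLM (𝕜 := ℝ) A :
    EuclideanSpace ℝ (Fin d) →L[ℝ] EuclideanSpace ℝ (Fin d)), Real.norm_eq_abs]

lemma mApply_sub (A B : Matrix (Fin d) (Fin d) ℝ) (v : EuclideanSpace ℝ (Fin d)) :
    mApply (A - B) v = mApply A v - mApply B v := by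
  unfold mApply; rw [map_sub]; rfl

lemma mApply_mul (A B : Matrix (Fin d) (Fin d) ℝ) (v : EuclideanSpace ℝ (Fin d)) :
    mApply (A * B) v = mApply A (mApply B v) := by
  unfold mApply; rw [map_mul]; rfl

lemma mApply_one (v : EuclideanSpace ℝ (Fin d)) : mApply (1 : Matrix (Fin d) (Fin d) ℝ) v = v := by
  unfold mApply; rw [map_one]; rfl

lemma mApply_smul (a : ℝ) (A : Matrix (Fin d) (Fin d) ℝ) (v : EuclideanSpace ℝ (Fin d)) :
    mApply (a • A) v = a • mApply A v := by
  unfold mApply; rw [map_smul]; rfl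

lemma mApply_add (A B : Matrix (Fin d) (Fin d) ℝ) (v : EuclideanSpace ℝ (Fin d)) :
    mApply (A + B) v = mApply A v + mApply B v := by
  unfold mApply; rw [map_add]; rfl

lemma taylor_bound (f : EuclideanSpace ℝ (Fin d) → ℝ)
    (Hf : EuclideanSpace ℝ (Fin d) → Matrix (Fin d) (Fin d) ℝ)
    (hHf : ∀ x, HasFDerivAt (gradient f)
      (Matrix.toEuclideanCLM (𝕜 := ℝ) (Hf x) :
        EuclideanSpace ℝ (Fin d) →L[ℝ] EuclideanSpace ℝ (Fin d)) x)
    (γ : ℝ) (hhessLip : ∀ x y, sNorm (Hf x - Hf y) ≤ γ * ‖x - y‖)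
    (x y : EuclideanSpace ℝ (Fin d)) :
    ‖gradient f y - gradient f x - mApply (Hf x) (y - x)‖ ≤ γ / 2 * ‖y - x‖ ^ 2 := by
  set v := y - x with hv
  set D : ℝ → EuclideanSpace ℝ (Fin d) :=
    fun τ => mApply (Hf (x + τ • v)) v - mApply (Hf x) v with hD
  have hDdiff : ∀ τ₁ τ₂ : ℝ, D τ₁ - D τ₂ = mApply (Hf (x + τ₁ • v) - Hf (x + τ₂ • v)) v := by
    intro τ₁ τ₂; rw [mApply_sub]; simp [hD]
  have hderiv : ∀ τ : ℝ, HasDerivAt (fun τ : ℝ => gradient f (x + τ • v) - τ • mApply (Hf x) v)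
      (D τ) τ := by
    intro τ
    have hc : HasDerivAt (fun τ : ℝ => x + τ • v) v τ := by
      simpa using ((hasDerivAt_id τ).smul_const v).const_add x
    have h1 : HasDerivAt (fun τ : ℝ => gradient f (x + τ • v)) (mApply (Hf (x + τ • v)) v) τ := by
      have h := (hHf (x + τ • v)).comp_hasDerivAt τ hc
      exact h
    have h2 : HasDerivAt (fun τ : ℝ => τ • mApply (Hf x) v) (mApply (Hf x) v) τ := by
      simpa using (hasDerivAt_id τ).smul_const (mApply (Hf x) v)
    exact h1.sub h2
  have hDcont : Continuous D := by
    have : LipschitzWith (γ * ‖v‖ ^ 2).toNNReal D := by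
      apply LipschitzWith.of_dist_le_mul
      intro τ₁ τ₂
      rw [dist_eq_norm, dist_eq_norm, hDdiff]
      calc ‖mApply (Hf (x + τ₁ • v) - Hf (x + τ₂ • v)) v‖
          ≤ sNorm (Hf (x + τ₁ • v) - Hf (x + τ₂ • v)) * ‖v‖ := mApply_norm_le _ _
        _ ≤ (γ * ‖(x + τ₁ • v) - (x + τ₂ • v)‖) * ‖v‖ :=
            mul_le_mul_of_nonneg_right (hhessLip _ _) (norm_nonneg v)
        _ = γ * ‖v‖ ^ 2 * ‖τ₁ - τ₂‖ := by
            rw [add_sub_add_left_eq_sub, ← sub_smul, norm_smul]; ring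
        _ ≤ (γ * ‖v‖ ^ 2).toNNReal * ‖τ₁ - τ₂‖ :=
            mul_le_mul_of_nonneg_right (Real.le_coe_toNNReal _) (norm_nonneg _)
    exact this.continuous
  have hFTC : gradient f (x + v) - 1 • mApply (Hf x) v - (gradient f (x + (0:ℝ) • v) - (0:ℝ) • mApply (Hf x) v)
      = ∫ τ in (0:ℝ)..1, D τ := by
    have := intervalIntegral.integral_eq_sub_of_hasDerivAt (a := 0) (b := 1)
      (f := fun τ : ℝ => gradient f (x + τ • v) - τ • mApply (Hf x) v) (f' := D)
      (fun τ _ => hderiv τ) (hDcont.intervalIntegrable 0 1)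
    rw [this]; simp
  have hbound : ∀ τ ∈ Set.Icc (0:ℝ) 1, ‖D τ‖ ≤ γ * ‖v‖ ^ 2 * τ := by
    intro τ hτ
    have h0 : D τ = mApply (Hf (x + τ • v) - Hf x) v := by
      have h := hDdiff τ 0
      rw [hD] at h
      simpa using h
    rw [h0]
    calc ‖mApply (Hf (x + τ • v) - Hf x) v‖
        ≤ sNorm (Hf (x + τ • v) - Hf x) * ‖v‖ := mApply_norm_le _ _
      _ ≤ (γ * ‖(x + τ • v) - x‖) * ‖v‖ :=
          mul_le_mul_of_nonneg_right (hhessLip _ _) (norm_nonneg v)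
      _ = γ * ‖v‖ ^ 2 * τ := by
          rw [add_sub_cancel_left, norm_smul, Real.norm_eq_abs, abs_of_nonneg hτ.1]; ring
  have hintle : ‖∫ τ in (0:ℝ)..1, D τ‖ ≤ γ / 2 * ‖v‖ ^ 2 := by
    calc ‖∫ τ in (0:ℝ)..1, D τ‖
        ≤ ∫ τ in (0:ℝ)..1, ‖D τ‖ :=
          intervalIntegral.norm_integral_le_integral_norm zero_le_one
      _ ≤ ∫ τ in (0:ℝ)..1, γ * ‖v‖ ^ 2 * τ := by
          apply intervalIntegral.integral_mono_on zero_le_one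
            (hDcont.norm.intervalIntegrable 0 1)
            ((continuous_const.mul continuous_id).intervalIntegrable 0 1)
          exact hbound
      _ = γ / 2 * ‖v‖ ^ 2 := by
          rw [intervalIntegral.integral_const_mul]
          simp [integral_id]
          ring
  have heq : gradient f y - gradient f x - mApply (Hf x) (y - x)
      = ∫ τ in (0:ℝ)..1, D τ := by
    rw [← hFTC]
    have hxy : x + v = y := by rw [hv]; abel
    rw [hxy]; simp [sub_right_comm]
    rfl
  rw [heq]
  exact hintle

lemma sNorm_sub_le (A B : Matrix (Fin d) (Fin d) ℝ) : sNorm (A - B) ≤ sNorm A + sNorm B := by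
  unfold sNorm; rw [map_sub]; exact norm_sub_le _ _

lemma mApplyv_sub (M : Matrix (Fin d) (Fin d) ℝ) (u w : EuclideanSpace ℝ (Fin d)) :
    mApply M (u - w) = mApply M u - mApply M w := map_sub _ _ _

lemma mApplyv_add (M : Matrix (Fin d) (Fin d) ℝ) (u w : EuclideanSpace ℝ (Fin d)) :
    mApply M (u + w) = mApply M u + mApply M w := map_add _ _ _

end Helpers

/-- The largest eigenvalue of a (symmetric) real matrix, as the supremum of its real spectrum. -/
noncomputable def lamMax {d : ℕ} (M : Matrix (Fin d) (Fin d) ℝ) : ℝ := sSup (spectrum ℝ M)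

/-- The smallest eigenvalue of a (symmetric) real matrix, as the infimum of its real spectrum. -/
noncomputable def lamMin {d : ℕ} (M : Matrix (Fin d) (Fin d) ℝ) : ℝ := sInf (spectrum ℝ M)

/-- Combined error bound (inequality `zt_full` in the proof of Theorem 1): for `t ≥ 1`,
`‖z(t+1)‖ ≤ (ηγ/2)‖z(t)‖² + ηβ‖z(t)‖
  + l‖z(t)‖(ρ^t ‖K̃(0)‖ + ηγ α(t-1) Σ_{s=0}^{t-1} ρ^(t-1-s) ‖z(s)‖)`. -/
theorem combined_error_bound {d : ℕ}
    (f : EuclideanSpace ℝ (Fin d) → ℝ)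
    (Hf : EuclideanSpace ℝ (Fin d) → Matrix (Fin d) (Fin d) ℝ)
    (hf : ContDiff ℝ 2 f)
    (hHf : ∀ x, HasFDerivAt (gradient f)
      (Matrix.toEuclideanCLM (𝕜 := ℝ) (Hf x) :
        EuclideanSpace ℝ (Fin d) →L[ℝ] EuclideanSpace ℝ (Fin d)) x)
    (l γ : ℝ)
    (hgradLip : ∀ x y, ‖gradient f x - gradient f y‖ ≤ l * ‖x - y‖)
    (hhessLip : ∀ x y, sNorm (Hf x - Hf y) ≤ γ * ‖x - y‖)
    (xstar : EuclideanSpace ℝ (Fin d)) (hcrit : gradient f xstar = 0)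
    (β : ℝ) (hβ : 0 < β) (hinv : IsUnit (Hf xstar + β • 1))
    (Kstar : Matrix (Fin d) (Fin d) ℝ) (hKstar : Kstar = (Hf xstar + β • 1)⁻¹)
    (η : ℝ) (hη : η = sNorm Kstar)
    (x : ℕ → EuclideanSpace ℝ (Fin d)) (K : ℕ → Matrix (Fin d) (Fin d) ℝ) (α : ℕ → ℝ)
    (t : ℕ) (ht : 1 ≤ t)
    (hx : ∀ s ≤ t, x (s + 1) = x s - mApply (K s) (gradient f (x s)))
    (hK : ∀ s ≤ t, K (s + 1) = K s - α s • ((Hf (x s) + β • 1) * K s - 1))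
    (hαnonneg : ∀ s, 0 ≤ α s)
    (hαmono : ∀ s₁ s₂, s₁ ≤ s₂ → s₂ ≤ t - 1 → α s₁ ≤ α s₂)
    (ρ : ℝ) (hρsup : ∀ s ≤ t, sNorm (1 - α s • (Hf (x s) + β • 1)) ≤ ρ) (hρ1 : ρ < 1) :
    ‖x (t + 1) - xstar‖ ≤
      η * γ / 2 * ‖x t - xstar‖ ^ 2 + η * β * ‖x t - xstar‖
        + l * ‖x t - xstar‖ * (ρ ^ t * sNorm (K 0 - Kstar)
            + η * γ * α (t - 1) * ∑ s ∈ Finset.range t, ρ ^ (t - 1 - s) * ‖x s - xstar‖) := by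
  -- dispatch the degenerate case d = 0
  rcases Nat.eq_zero_or_pos d with hd | hd
  · subst hd
    have hz : ∀ w : EuclideanSpace ℝ (Fin 0), w = 0 := fun w => Subsingleton.elim w 0
    rw [hz (x (t+1) - xstar), hz (x t - xstar)]
    simp
  -- basic nonnegativity facts
  have hρ0 : 0 ≤ ρ := le_trans (sNorm_nonneg _) (hρsup 0 (Nat.zero_le t))
  have hη0 : 0 ≤ η := hη ▸ sNorm_nonneg Kstar
  have hγ0 : 0 ≤ γ := by
    have h1 := hhessLip 0 (EuclideanSpace.single ⟨0, hd⟩ (1:ℝ))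
    have h2 : ‖(0:EuclideanSpace ℝ (Fin d)) - EuclideanSpace.single ⟨0, hd⟩ (1:ℝ)‖ = 1 := by
      rw [zero_sub, norm_neg, EuclideanSpace.norm_single]; norm_num
    rw [h2, mul_one] at h1
    exact le_trans (sNorm_nonneg _) h1
  -- inverse identities
  have hdet := (Matrix.isUnit_iff_isUnit_det _).mp hinv
  have hKright : (Hf xstar + β • 1) * Kstar = 1 := by
    rw [hKstar]; exact Matrix.mul_nonsing_inv _ hdet
  have hKleft : Kstar * (Hf xstar + β • 1) = 1 := by
    rw [hKstar]; exact Matrix.nonsing_inv_mul _ hdet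
  -- preconditioner one-step recursion
  have hKrec : ∀ s ≤ t, sNorm (K (s+1) - Kstar)
      ≤ ρ * sNorm (K s - Kstar) + α s * ((γ * ‖x s - xstar‖) * η) := by
    intro s hs
    have key : (Hf (x s) + β • 1) * Kstar - (Hf (x s) - Hf xstar) * Kstar = 1 := by
      rw [← sub_mul]
      have h3 : Hf (x s) + β • 1 - (Hf (x s) - Hf xstar) = Hf xstar + β • 1 := by abel
      rw [h3, hKright]
    have hiden : K (s+1) - Kstar
        = (1 - α s • (Hf (x s) + β • 1)) * (K s - Kstar)
          - α s • ((Hf (x s) - Hf xstar) * Kstar) := by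
      have expand : (1 - α s • (Hf (x s) + β • 1)) * (K s - Kstar)
            - α s • ((Hf (x s) - Hf xstar) * Kstar)
          = K s - Kstar - α s • ((Hf (x s) + β • 1) * K s)
            + α s • ((Hf (x s) + β • 1) * Kstar - (Hf (x s) - Hf xstar) * Kstar) := by
        simp only [sub_mul, one_mul, mul_sub, smul_sub, smul_mul_assoc]
        abel
      rw [expand, key, hK s hs, smul_sub]
      abel
    rw [hiden]
    calc sNorm ((1 - α s • (Hf (x s) + β • 1)) * (K s - Kstar)
            - α s • ((Hf (x s) - Hf xstar) * Kstar))
        ≤ sNorm ((1 - α s • (Hf (x s) + β • 1)) * (K s - Kstar))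
            + sNorm (α s • ((Hf (x s) - Hf xstar) * Kstar)) := sNorm_sub_le _ _
      _ ≤ sNorm (1 - α s • (Hf (x s) + β • 1)) * sNorm (K s - Kstar)
            + |α s| * sNorm ((Hf (x s) - Hf xstar) * Kstar) := by
          rw [sNorm_smul]
          exact add_le_add_left (sNorm_mul_le _ _) _
      _ ≤ ρ * sNorm (K s - Kstar) + α s * ((γ * ‖x s - xstar‖) * η) := by
          apply add_le_add
          · exact mul_le_mul (hρsup s hs) le_rfl (sNorm_nonneg _) hρ0
          · rw [abs_of_nonneg (hαnonneg s)]
            apply mul_le_mul_of_nonneg_left _ (hαnonneg s)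
            calc sNorm ((Hf (x s) - Hf xstar) * Kstar)
                ≤ sNorm (Hf (x s) - Hf xstar) * sNorm Kstar := sNorm_mul_le _ _
              _ ≤ (γ * ‖x s - xstar‖) * η := by
                  rw [hη]
                  exact mul_le_mul_of_nonneg_right (hhessLip _ _) (sNorm_nonneg _)
  -- unrolled preconditioner bound
  have hunroll : ∀ n, n ≤ t → sNorm (K n - Kstar)
      ≤ ρ ^ n * sNorm (K 0 - Kstar)
        + γ * η * ∑ s ∈ Finset.range n, ρ ^ (n - 1 - s) * (α s * ‖x s - xstar‖) := by
    intro n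
    induction n with
    | zero => intro _; simp
    | succ n ih =>
      intro hn1
      have hn : n ≤ t := le_trans (Nat.le_succ n) hn1
      have hsum : ∑ s ∈ Finset.range (n+1), ρ ^ (n + 1 - 1 - s) * (α s * ‖x s - xstar‖)
          = ρ * ∑ s ∈ Finset.range n, ρ ^ (n - 1 - s) * (α s * ‖x s - xstar‖)
            + α n * ‖x n - xstar‖ := by
        rw [Finset.sum_range_succ, Finset.mul_sum]
        congr 1
        · apply Finset.sum_congr rfl
          intro s hs
          rw [Finset.mem_range] at hs
          have he : n + 1 - 1 - s = (n - 1 - s) + 1 := by omega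
          rw [he, pow_succ']
          ring
        · simp
      calc sNorm (K (n+1) - Kstar)
          ≤ ρ * sNorm (K n - Kstar) + α n * ((γ * ‖x n - xstar‖) * η) := hKrec n hn
        _ ≤ ρ * (ρ ^ n * sNorm (K 0 - Kstar)
              + γ * η * ∑ s ∈ Finset.range n, ρ ^ (n - 1 - s) * (α s * ‖x s - xstar‖))
              + α n * ((γ * ‖x n - xstar‖) * η) :=
            add_le_add_left (mul_le_mul_of_nonneg_left (ih hn) hρ0) _
        _ = ρ ^ (n+1) * sNorm (K 0 - Kstar)
              + γ * η * ∑ s ∈ Finset.range (n+1), ρ ^ (n + 1 - 1 - s) * (α s * ‖x s - xstar‖) := by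
            rw [hsum, pow_succ]
            ring
  -- monotone alpha bound on the sum
  have hsumle : ∑ s ∈ Finset.range t, ρ ^ (t - 1 - s) * (α s * ‖x s - xstar‖)
      ≤ α (t-1) * ∑ s ∈ Finset.range t, ρ ^ (t - 1 - s) * ‖x s - xstar‖ := by
    rw [Finset.mul_sum]
    apply Finset.sum_le_sum
    intro s hs
    rw [Finset.mem_range] at hs
    have h1 : α s ≤ α (t-1) := hαmono s (t-1) (by omega) le_rfl
    have h2 : (0:ℝ) ≤ ρ ^ (t - 1 - s) := pow_nonneg hρ0 _
    calc ρ ^ (t - 1 - s) * (α s * ‖x s - xstar‖)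
        ≤ ρ ^ (t - 1 - s) * (α (t-1) * ‖x s - xstar‖) := by
          apply mul_le_mul_of_nonneg_left _ h2
          exact mul_le_mul_of_nonneg_right h1 (norm_nonneg _)
      _ = α (t-1) * (ρ ^ (t - 1 - s) * ‖x s - xstar‖) := by ring
  -- final preconditioner bound
  set B : ℝ := ρ ^ t * sNorm (K 0 - Kstar)
      + η * γ * α (t-1) * ∑ s ∈ Finset.range t, ρ ^ (t - 1 - s) * ‖x s - xstar‖ with hB
  have hKfinal : sNorm (K t - Kstar) ≤ B := by
    calc sNorm (K t - Kstar)
        ≤ ρ ^ t * sNorm (K 0 - Kstar)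
          + γ * η * ∑ s ∈ Finset.range t, ρ ^ (t - 1 - s) * (α s * ‖x s - xstar‖) :=
          hunroll t le_rfl
      _ ≤ B := by
          have h2 := mul_le_mul_of_nonneg_left hsumle (mul_nonneg hγ0 hη0)
          have h3 : γ * η * (α (t-1) * ∑ s ∈ Finset.range t, ρ ^ (t - 1 - s) * ‖x s - xstar‖)
              = η * γ * α (t-1) * ∑ s ∈ Finset.range t, ρ ^ (t - 1 - s) * ‖x s - xstar‖ := by
            ring
          rw [hB]
          linarith [h2.trans_eq h3]
  have hB0 : 0 ≤ B := le_trans (sNorm_nonneg _) hKfinal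
  -- one-step error decomposition
  set g : EuclideanSpace ℝ (Fin d) := gradient f (x t) with hg
  have hgl : ‖g‖ ≤ l * ‖x t - xstar‖ := by
    have h := hgradLip (x t) xstar
    rw [hcrit, sub_zero] at h
    rw [hg]
    exact h
  have hstep : x (t+1) - xstar = (x t - xstar - mApply Kstar g) - mApply (K t - Kstar) g := by
    rw [hx t le_rfl, ← hg, mApply_sub]
    abel
  have hz_eq : mApply Kstar (mApply (Hf xstar) (x t - xstar) + β • (x t - xstar))
      = x t - xstar := by
    calc mApply Kstar (mApply (Hf xstar) (x t - xstar) + β • (x t - xstar))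
        = mApply Kstar (mApply (Hf xstar + β • 1) (x t - xstar)) := by
          rw [mApply_add, mApply_smul, mApply_one]
      _ = mApply (Kstar * (Hf xstar + β • 1)) (x t - xstar) := (mApply_mul _ _ _).symm
      _ = x t - xstar := by rw [hKleft, mApply_one]
  have hmain1 : ‖x t - xstar - mApply Kstar g‖
      ≤ η * β * ‖x t - xstar‖ + η * (γ / 2) * ‖x t - xstar‖ ^ 2 := by
    have harr : β • (x t - xstar) - (g - mApply (Hf xstar) (x t - xstar))
        = (mApply (Hf xstar) (x t - xstar) + β • (x t - xstar)) - g := by abel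
    have heq : x t - xstar - mApply Kstar g
        = mApply Kstar (β • (x t - xstar) - (g - mApply (Hf xstar) (x t - xstar))) := by
      rw [harr, mApplyv_sub, hz_eq]
    have htay : ‖g - mApply (Hf xstar) (x t - xstar)‖ ≤ γ / 2 * ‖x t - xstar‖ ^ 2 := by
      have h := taylor_bound f Hf hHf γ hhessLip xstar (x t)
      rw [hcrit, sub_zero] at h
      rw [hg]
      exact h
    have hn1 : ‖β • (x t - xstar) - (g - mApply (Hf xstar) (x t - xstar))‖
        ≤ β * ‖x t - xstar‖ + γ / 2 * ‖x t - xstar‖ ^ 2 := by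
      calc ‖β • (x t - xstar) - (g - mApply (Hf xstar) (x t - xstar))‖
          ≤ ‖β • (x t - xstar)‖ + ‖g - mApply (Hf xstar) (x t - xstar)‖ := norm_sub_le _ _
        _ ≤ β * ‖x t - xstar‖ + γ / 2 * ‖x t - xstar‖ ^ 2 := by
            rw [norm_smul, Real.norm_eq_abs, abs_of_pos hβ]
            exact add_le_add_right htay _
    calc ‖x t - xstar - mApply Kstar g‖
        = ‖mApply Kstar (β • (x t - xstar) - (g - mApply (Hf xstar) (x t - xstar)))‖ := by
          rw [heq]
      _ ≤ η * ‖β • (x t - xstar) - (g - mApply (Hf xstar) (x t - xstar))‖ := by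
          rw [hη]
          exact mApply_norm_le _ _
      _ ≤ η * (β * ‖x t - xstar‖ + γ / 2 * ‖x t - xstar‖ ^ 2) :=
          mul_le_mul_of_nonneg_left hn1 hη0
      _ = η * β * ‖x t - xstar‖ + η * (γ / 2) * ‖x t - xstar‖ ^ 2 := by ring
  calc ‖x (t+1) - xstar‖
      = ‖(x t - xstar - mApply Kstar g) - mApply (K t - Kstar) g‖ := by rw [hstep]
    _ ≤ ‖x t - xstar - mApply Kstar g‖ + ‖mApply (K t - Kstar) g‖ := norm_sub_le _ _
    _ ≤ (η * β * ‖x t - xstar‖ + η * (γ / 2) * ‖x t - xstar‖ ^ 2) + B * (l * ‖x t - xstar‖) :=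
        add_le_add hmain1
          (le_trans (mApply_norm_le _ _) (mul_le_mul hKfinal hgl (norm_nonneg g) hB0))
    _ = η * γ / 2 * ‖x t - xstar‖ ^ 2 + η * β * ‖x t - xstar‖ + l * ‖x t - xstar‖ * B := by
        ring
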